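/- On ℝ^{(p+p+r+r)×p} with coordinates X₀, X₁ ∈ ℝ^{p×p} and X₂, X₃ ∈ ℝ^{r×p}, set A = X₀ − X₁, B = X₀ + X₁, W = X₂ + iX₃, and define the operators τ(φ) = −4 Σ_{k,l=1}^{p} ∂²φ/∂a_{kl}∂b_{kl} + 4 Σ_{k=1}^{r} Σ_{l=1}^{p} ∂²φ/∂w_{kl}∂w̄_{kl} and the corresponding bilinear κ. Let M̂ be a complex (p+r)×(p+r) matrix in the complexification of 𝔰𝔬(p,r) (i.e. M̂ᵗ I_{pr} + I_{pr} M̂ = 0 where I_{pr} = diag(−I_p, I_r)). Then the components of the map Φ̂(X) = (A; W) + M̂ · (B; W̄) satisfy τ(φ) = 0 and κ(φ, ψ) = 0 for all components φ, ψ of Φ̂. -/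

import Mathlib

open Matrix Complex

noncomputable section

/-- `ℝ^{(p+p+r+r)×p}` with blocks `X₀, X₁ ∈ ℝ^{p×p}` and `X₂, X₃ ∈ ℝ^{r×p}`. -/
abbrev RSpace (p r : ℕ) :=
  (Fin p → Fin p → ℝ) × (Fin p → Fin p → ℝ) × (Fin r → Fin p → ℝ) × (Fin r → Fin p → ℝ)

def bR (n p : ℕ) (k : Fin n) (l : Fin p) : Fin n → Fin p → ℝ :=
  fun a b => if a = k ∧ b = l then 1 else 0

/-- unit direction in the `X₀` block. -/
def e0 (p r : ℕ) (k l : Fin p) : RSpace p r := (bR p p k l, 0, 0, 0)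
def e1 (p r : ℕ) (k l : Fin p) : RSpace p r := (0, bR p p k l, 0, 0)
def e2 (p r : ℕ) (k : Fin r) (l : Fin p) : RSpace p r := (0, 0, bR r p k l, 0)
def e3 (p r : ℕ) (k : Fin r) (l : Fin p) : RSpace p r := (0, 0, 0, bR r p k l)

/-- `∂/∂a_{kl}` where `A = X₀ − X₁`. -/
def da (p r : ℕ) (f : RSpace p r → ℂ) (x : RSpace p r) (k l : Fin p) : ℂ :=
  (fderiv ℝ f x (e0 p r k l) - fderiv ℝ f x (e1 p r k l)) / 2

/-- `∂/∂b_{kl}` where `B = X₀ + X₁`. -/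
def db (p r : ℕ) (f : RSpace p r → ℂ) (x : RSpace p r) (k l : Fin p) : ℂ :=
  (fderiv ℝ f x (e0 p r k l) + fderiv ℝ f x (e1 p r k l)) / 2

/-- `∂/∂w_{kl}` where `W = X₂ + iX₃`. -/
def dw (p r : ℕ) (f : RSpace p r → ℂ) (x : RSpace p r) (k : Fin r) (l : Fin p) : ℂ :=
  (fderiv ℝ f x (e2 p r k l) - Complex.I * fderiv ℝ f x (e3 p r k l)) / 2

/-- `∂/∂w̄_{kl}`. -/
def dwbar (p r : ℕ) (f : RSpace p r → ℂ) (x : RSpace p r) (k : Fin r) (l : Fin p) : ℂ :=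
  (fderiv ℝ f x (e2 p r k l) + Complex.I * fderiv ℝ f x (e3 p r k l)) / 2

/-- `τ(φ) = −4 Σ_{k,l≤p} ∂²φ/∂a∂b + 4 Σ_{k≤r,l≤p} ∂²φ/∂w∂w̄`. -/
def tauR (p r : ℕ) (f : RSpace p r → ℂ) (x : RSpace p r) : ℂ :=
  (-4 : ℂ) * ∑ k : Fin p, ∑ l : Fin p, da p r (fun y => db p r f y k l) x k l
    + 4 * ∑ k : Fin r, ∑ l : Fin p, dw p r (fun y => dwbar p r f y k l) x k l

/-- the corresponding bilinear operator `κ`. -/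
def kapR (p r : ℕ) (f g : RSpace p r → ℂ) (x : RSpace p r) : ℂ :=
  (-2 : ℂ) * ∑ k : Fin p, ∑ l : Fin p,
      (da p r f x k l * db p r g x k l + db p r f x k l * da p r g x k l)
    + 2 * ∑ k : Fin r, ∑ l : Fin p,
      (dw p r f x k l * dwbar p r g x k l + dwbar p r f x k l * dw p r g x k l)

/-- the block matrix `A = X₀ − X₁` (complexified). -/
def matA (p r : ℕ) (x : RSpace p r) : Matrix (Fin p) (Fin p) ℂ :=
  fun k l => ((x.1 k l - x.2.1 k l : ℝ) : ℂ)
def matB (p r : ℕ) (x : RSpace p r) : Matrix (Fin p) (Fin p) ℂ :=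
  fun k l => ((x.1 k l + x.2.1 k l : ℝ) : ℂ)
def matW (p r : ℕ) (x : RSpace p r) : Matrix (Fin r) (Fin p) ℂ :=
  fun k l => (x.2.2.1 k l : ℂ) + Complex.I * (x.2.2.2 k l : ℂ)
def matWbar (p r : ℕ) (x : RSpace p r) : Matrix (Fin r) (Fin p) ℂ :=
  fun k l => (x.2.2.1 k l : ℂ) - Complex.I * (x.2.2.2 k l : ℂ)

/-- `I_{pr} = diag(−I_p, I_r)`. -/
def Ipr (p r : ℕ) : Matrix (Fin p ⊕ Fin r) (Fin p ⊕ Fin r) ℂ :=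
  Matrix.fromBlocks (-1) 0 0 1

/-- `Φ̂(X) = (A; W) + M̂ (B; W̄)`. -/
def PhiHat (p r : ℕ) (M : Matrix (Fin p ⊕ Fin r) (Fin p ⊕ Fin r) ℂ) (x : RSpace p r) :
    Matrix (Fin p ⊕ Fin r) (Fin p) ℂ :=
  Matrix.fromRows (matA p r x) (matW p r x)
    + M * Matrix.fromRows (matB p r x) (matWbar p r x)

/- auxiliary lemmas -/
lemma fromRows_add' {m₁ m₂ n : Type*} (A A' : Matrix m₁ n ℂ) (B B' : Matrix m₂ n ℂ) :
    Matrix.fromRows (A + A') (B + B') = Matrix.fromRows A B + Matrix.fromRows A' B' := by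
  ext i j; cases i <;> simp

lemma fromRows_smul' {m₁ m₂ n : Type*} (c : ℝ) (A : Matrix m₁ n ℂ) (B : Matrix m₂ n ℂ) :
    Matrix.fromRows (c • A) (c • B) = c • Matrix.fromRows A B := by
  ext i j; cases i <;> simp

lemma phi_add (p r : ℕ) (M : Matrix (Fin p ⊕ Fin r) (Fin p ⊕ Fin r) ℂ) (y z : RSpace p r) :
    PhiHat p r M (y + z) = PhiHat p r M y + PhiHat p r M z := by
  have hA : matA p r (y + z) = matA p r y + matA p r z := by
    funext k l; simp [matA]; push_cast; ring
  have hB : matB p r (y + z) = matB p r y + matB p r z := by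
    funext k l; simp [matB]; push_cast; ring
  have hW : matW p r (y + z) = matW p r y + matW p r z := by
    funext k l; simp [matW]; push_cast; ring
  have hWb : matWbar p r (y + z) = matWbar p r y + matWbar p r z := by
    funext k l; simp [matWbar]; push_cast; ring
  rw [PhiHat, PhiHat, PhiHat, hA, hB, hW, hWb, fromRows_add', fromRows_add', Matrix.mul_add]
  abel

lemma phi_smul (p r : ℕ) (M : Matrix (Fin p ⊕ Fin r) (Fin p ⊕ Fin r) ℂ) (c : ℝ)
    (y : RSpace p r) : PhiHat p r M (c • y) = c • PhiHat p r M y := by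
  have hsc : ∀ z : ℂ, c • z = (c : ℂ) * z := fun z => by simp [Complex.real_smul]
  have hA : matA p r (c • y) = c • matA p r y := by
    funext k l; simp [matA, hsc]; push_cast; ring
  have hB : matB p r (c • y) = c • matB p r y := by
    funext k l; simp [matB, hsc]; push_cast; ring
  have hW : matW p r (c • y) = c • matW p r y := by
    funext k l; simp [matW, hsc]; push_cast; ring
  have hWb : matWbar p r (c • y) = c • matWbar p r y := by
    funext k l; simp [matWbar, hsc]; push_cast; ring
  rw [PhiHat, PhiHat, hA, hB, hW, hWb, fromRows_smul', fromRows_smul', Matrix.mul_smul,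
    smul_add]

lemma phi_linear (p r : ℕ) (M : Matrix (Fin p ⊕ Fin r) (Fin p ⊕ Fin r) ℂ)
    (i : Fin p ⊕ Fin r) (j : Fin p) :
    IsLinearMap ℝ (fun y : RSpace p r => PhiHat p r M y i j) := by
  constructor
  · intro y z; rw [phi_add]; rfl
  · intro c y; rw [phi_smul]; rfl

lemma fderiv_phi (p r : ℕ) (M : Matrix (Fin p ⊕ Fin r) (Fin p ⊕ Fin r) ℂ)
    (i : Fin p ⊕ Fin r) (j : Fin p) (x v : RSpace p r) :
    fderiv ℝ (fun y : RSpace p r => PhiHat p r M y i j) x v = PhiHat p r M v i j := by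
  have h := phi_linear p r M i j
  let L := (h.mk' _).toContinuousLinearMap
  have hf : HasFDerivAt (fun y : RSpace p r => PhiHat p r M y i j) L x := L.hasFDerivAt
  rw [hf.fderiv]; rfl

lemma phi_apply (p r : ℕ) (M : Matrix (Fin p ⊕ Fin r) (Fin p ⊕ Fin r) ℂ)
    (x : RSpace p r) (i : Fin p ⊕ Fin r) (j : Fin p) :
    PhiHat p r M x i j =
      Sum.elim (matA p r x) (matW p r x) i j
        + (∑ a : Fin p, M i (Sum.inl a) * matB p r x a j)
        + (∑ b : Fin r, M i (Sum.inr b) * matWbar p r x b j) := by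
  simp [PhiHat, Matrix.mul_apply, Matrix.fromRows, Sum.elim, Fintype.sum_sum_type, add_assoc]

lemma phi_e0 (p r : ℕ) (M : Matrix (Fin p ⊕ Fin r) (Fin p ⊕ Fin r) ℂ)
    (i : Fin p ⊕ Fin r) (j : Fin p) (k l : Fin p) :
    PhiHat p r M (e0 p r k l) i j =
      (if i = Sum.inl k ∧ j = l then 1 else 0)
        + M i (Sum.inl k) * (if j = l then 1 else 0) := by
  rw [phi_apply]
  rcases i with a | a <;>
    simp [e0, bR, Sum.elim, matA, matB, matW, matWbar, ite_and, mul_ite, Finset.sum_ite_eq',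
      Sum.inl.injEq, apply_ite (fun t : ℝ => (t : ℂ))]

lemma phi_e1 (p r : ℕ) (M : Matrix (Fin p ⊕ Fin r) (Fin p ⊕ Fin r) ℂ)
    (i : Fin p ⊕ Fin r) (j : Fin p) (k l : Fin p) :
    PhiHat p r M (e1 p r k l) i j =
      -(if i = Sum.inl k ∧ j = l then 1 else 0)
        + M i (Sum.inl k) * (if j = l then 1 else 0) := by
  rw [phi_apply]
  rcases i with a | a <;>
    simp [e1, bR, Sum.elim, matA, matB, matW, matWbar, ite_and, mul_ite, Finset.sum_ite_eq',
      Sum.inl.injEq, apply_ite (fun t : ℝ => (t : ℂ))]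

lemma phi_e2 (p r : ℕ) (M : Matrix (Fin p ⊕ Fin r) (Fin p ⊕ Fin r) ℂ)
    (i : Fin p ⊕ Fin r) (j : Fin p) (k : Fin r) (l : Fin p) :
    PhiHat p r M (e2 p r k l) i j =
      (if i = Sum.inr k ∧ j = l then 1 else 0)
        + M i (Sum.inr k) * (if j = l then 1 else 0) := by
  rw [phi_apply]
  rcases i with a | a <;>
    simp [e2, bR, Sum.elim, matA, matB, matW, matWbar, ite_and, mul_ite, Finset.sum_ite_eq',
      Sum.inr.injEq, apply_ite (fun t : ℝ => (t : ℂ))]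

lemma phi_e3 (p r : ℕ) (M : Matrix (Fin p ⊕ Fin r) (Fin p ⊕ Fin r) ℂ)
    (i : Fin p ⊕ Fin r) (j : Fin p) (k : Fin r) (l : Fin p) :
    PhiHat p r M (e3 p r k l) i j =
      Complex.I * (if i = Sum.inr k ∧ j = l then 1 else 0)
        - Complex.I * M i (Sum.inr k) * (if j = l then 1 else 0) := by
  rw [phi_apply]
  rcases i with a | a <;>
    simp [e3, bR, Sum.elim, matA, matB, matW, matWbar, ite_and, mul_ite, Finset.sum_ite_eq',
      Sum.inr.injEq, apply_ite (fun t : ℝ => (t : ℂ))] <;> ring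

lemma ite_ite_same (c : Prop) [Decidable c] (a b d : ℂ) :
    (if c then (if c then a else b) else d) = if c then a else d := by
  split <;> simp

lemma sum_sum_ite {n m : ℕ} (b : Fin n) (j : Fin m) (f : Fin n → ℂ) :
    (∑ x : Fin n, ∑ y : Fin m, if b = x then if j = y then f x else 0 else 0) = f b := by
  rw [Finset.sum_comm]; simp

lemma da_phi (p r : ℕ) (M : Matrix (Fin p ⊕ Fin r) (Fin p ⊕ Fin r) ℂ)
    (i : Fin p ⊕ Fin r) (j : Fin p) (x : RSpace p r) (k l : Fin p) :
    da p r (fun y => PhiHat p r M y i j) x k l =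
      (if i = Sum.inl k ∧ j = l then 1 else 0) := by
  rw [da, fderiv_phi, fderiv_phi, phi_e0, phi_e1]; ring

lemma db_phi (p r : ℕ) (M : Matrix (Fin p ⊕ Fin r) (Fin p ⊕ Fin r) ℂ)
    (i : Fin p ⊕ Fin r) (j : Fin p) (x : RSpace p r) (k l : Fin p) :
    db p r (fun y => PhiHat p r M y i j) x k l =
      M i (Sum.inl k) * (if j = l then 1 else 0) := by
  rw [db, fderiv_phi, fderiv_phi, phi_e0, phi_e1]; ring

lemma dw_phi (p r : ℕ) (M : Matrix (Fin p ⊕ Fin r) (Fin p ⊕ Fin r) ℂ)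
    (i : Fin p ⊕ Fin r) (j : Fin p) (x : RSpace p r) (k : Fin r) (l : Fin p) :
    dw p r (fun y => PhiHat p r M y i j) x k l =
      (if i = Sum.inr k ∧ j = l then 1 else 0) := by
  rw [dw, fderiv_phi, fderiv_phi, phi_e2, phi_e3]
  linear_combination ((M i (Sum.inr k) * (if j = l then 1 else 0)
    - (if i = Sum.inr k ∧ j = l then (1:ℂ) else 0)) / 2) * Complex.I_sq

lemma dwbar_phi (p r : ℕ) (M : Matrix (Fin p ⊕ Fin r) (Fin p ⊕ Fin r) ℂ)
    (i : Fin p ⊕ Fin r) (j : Fin p) (x : RSpace p r) (k : Fin r) (l : Fin p) :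
    dwbar p r (fun y => PhiHat p r M y i j) x k l =
      M i (Sum.inr k) * (if j = l then 1 else 0) := by
  rw [dwbar, fderiv_phi, fderiv_phi, phi_e2, phi_e3]
  linear_combination (((if i = Sum.inr k ∧ j = l then (1:ℂ) else 0)
    - M i (Sum.inr k) * (if j = l then 1 else 0)) / 2) * Complex.I_sq

/-- if `M̂` lies in the complexification of `𝔰𝔬(p,r)`, then the components of
`Φ̂(X) = (A;W) + M̂(B;W̄)` form an orthogonal harmonic family:
`τ(φ) = 0` and `κ(φ,ψ) = 0` for any two components `φ, ψ` of `Φ̂`. -/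
theorem stmt7 (p r : ℕ) (M : Matrix (Fin p ⊕ Fin r) (Fin p ⊕ Fin r) ℂ)
    (hM : Mᵀ * Ipr p r + Ipr p r * M = 0)
    (i i' : Fin p ⊕ Fin r) (j j' : Fin p) (x : RSpace p r) :
    tauR p r (fun y => PhiHat p r M y i j) x = 0 ∧
    kapR p r (fun y => PhiHat p r M y i j) (fun y => PhiHat p r M y i' j') x = 0 := by
  constructor
  · -- tau
    have h1 : ∀ k l : Fin p,
        da p r (fun y => db p r (fun z => PhiHat p r M z i j) y k l) x k l = 0 := by
      intro k l
      have hc : (fun y => db p r (fun z => PhiHat p r M z i j) y k l)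
          = fun _ : RSpace p r => M i (Sum.inl k) * (if j = l then 1 else 0) :=
        funext fun y => db_phi p r M i j y k l
      rw [da, hc, fderiv_fun_const]
      simp
    have h2 : ∀ (k : Fin r) (l : Fin p),
        dw p r (fun y => dwbar p r (fun z => PhiHat p r M z i j) y k l) x k l = 0 := by
      intro k l
      have hc : (fun y => dwbar p r (fun z => PhiHat p r M z i j) y k l)
          = fun _ : RSpace p r => M i (Sum.inr k) * (if j = l then 1 else 0) :=
        funext fun y => dwbar_phi p r M i j y k l
      rw [dw, hc, fderiv_fun_const]
      simp
    simp [tauR, h1, h2]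
  · -- kappa
    have h0 := congrFun (congrFun hM i) i'
    simp only [Matrix.add_apply, Matrix.mul_apply, Matrix.transpose_apply,
      Matrix.zero_apply] at h0
    simp only [kapR, da_phi, db_phi, dw_phi, dwbar_phi]
    rcases i with a | a <;> rcases i' with b | b <;>
      · simp only [Ipr, Fintype.sum_sum_type, Matrix.fromBlocks_apply₁₁,
          Matrix.fromBlocks_apply₁₂, Matrix.fromBlocks_apply₂₁, Matrix.fromBlocks_apply₂₂,
          Matrix.neg_apply, Matrix.one_apply, Matrix.zero_apply, mul_ite, ite_mul,
          neg_mul, mul_zero, zero_mul, mul_one, one_mul, mul_neg, neg_neg,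
          Finset.sum_neg_distrib, Finset.sum_ite_eq, Finset.sum_ite_eq',
          Finset.mem_univ, if_true, add_zero, zero_add,
          Finset.sum_const_zero, neg_zero] at h0
        by_cases hj : j = j' <;>
          simp only [hj, Sum.inl.injEq, Sum.inr.injEq, ite_and, mul_ite, ite_mul,
            mul_zero, zero_mul, mul_one, one_mul, Finset.sum_add_distrib,
            Finset.sum_ite_eq, Finset.sum_ite_eq', Finset.mem_univ, if_true, if_pos rfl,
            Finset.sum_const_zero, add_zero, zero_add, reduceCtorEq, if_false,
            ite_self, ite_ite_same, sum_sum_ite]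
        all_goals first
          | (simp [hj]; done)
          | (simp only [if_neg (fun h => hj h.symm), if_neg hj, mul_zero, zero_mul,
              Finset.sum_const_zero, add_zero, zero_add, neg_zero, mul_zero]; ring)
          | linear_combination -2 * h0
          | linear_combination 2 * h0
          | ring


end
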